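/- Call a singleton {i} ⊆ {1,...,n} a driver set for the path graph P_n if the pair (A, e_i) is controllable, where A is the adjacency matrix of P_n and e_i the i-th standard basis vector; equivalently (by the PBH test), no eigenvector of A has i-th entry equal to zero. Then the number of i ∈ {1,...,n} such that {i} is a driver set for P_n equals Euler's totient φ(n+1). -/

import Mathlib

open Real Finset

/-- The adjacency matrix of the path graph `P_n` on vertices `1,…,n`
(vertex `i` is represented by `⟨i-1⟩ : Fin n`). -/
def pathAdj (n : ℕ) : Matrix (Fin n) (Fin n) ℝ :=
  Matrix.of fun i j => if i.1 + 1 = j.1 ∨ j.1 + 1 = i.1 then 1 else 0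

/-- Normalized Chebyshev-like sequence: `cheb μ j * sin θ = sin (j θ)` for `μ = 2 cos θ`. -/
def cheb (μ : ℝ) : ℕ → ℝ
  | 0 => 0
  | 1 => 1
  | (j+2) => μ * cheb μ (j+1) - cheb μ j

lemma cheb_sin (θ : ℝ) (j : ℕ) :
    cheb (2 * Real.cos θ) j * Real.sin θ = Real.sin (j * θ) := by
  induction j using Nat.twoStepInduction with
  | zero => simp [cheb]
  | one => simp [cheb]
  | more j ih1 ih2 =>
    have e1 : ((j+2 : ℕ) : ℝ) * θ = ((j+1 : ℕ) : ℝ) * θ + θ := by push_cast; ring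
    have e2 : ((j : ℕ) : ℝ) * θ = ((j+1 : ℕ) : ℝ) * θ - θ := by push_cast; ring
    rw [show cheb (2 * Real.cos θ) (j+2)
        = 2 * Real.cos θ * cheb (2 * Real.cos θ) (j+1) - cheb (2 * Real.cos θ) j from rfl,
      e1, Real.sin_add]
    rw [e2, Real.sin_sub] at ih1
    linear_combination 2 * Real.cos θ * ih2 - ih1

lemma cheb_ge (μ : ℝ) (hμ : 2 ≤ μ) (j : ℕ) :
    (j : ℝ) ≤ cheb μ j ∧ cheb μ j + 1 ≤ cheb μ (j+1) := by
  induction j with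
  | zero => simp [cheb]
  | succ j ih =>
    obtain ⟨h1, h2⟩ := ih
    refine ⟨by push_cast; linarith, ?_⟩
    rw [show cheb μ (j+2) = μ * cheb μ (j+1) - cheb μ j from rfl]
    nlinarith [h1, h2, Nat.cast_nonneg (α := ℝ) j]

lemma cheb_neg (μ : ℝ) (j : ℕ) : cheb (-μ) j = (-1)^(j+1) * cheb μ j := by
  induction j using Nat.twoStepInduction with
  | zero => simp [cheb]
  | one => simp [cheb]
  | more j ih1 ih2 =>
    rw [show cheb (-μ) (j+2) = (-μ) * cheb (-μ) (j+1) - cheb (-μ) j from rfl,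
      show cheb μ (j+2) = μ * cheb μ (j+1) - cheb μ j from rfl, ih1, ih2]
    ring

lemma cheb_ne_zero (μ : ℝ) (hμ : 2 ≤ |μ|) (j : ℕ) (hj : 0 < j) : cheb μ j ≠ 0 := by
  have hj' : (1:ℝ) ≤ j := by exact_mod_cast hj
  rcases le_or_gt 2 μ with h | h
  · have := (cheb_ge μ h j).1
    intro hz; rw [hz] at this; linarith
  · have hμ' : 2 ≤ -μ := by rcases abs_cases μ with ⟨h1, _⟩ | ⟨h1, _⟩ <;> linarith
    have h1 := (cheb_ge (-μ) hμ' j).1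
    have h2 := cheb_neg μ j
    intro hz; rw [hz, mul_zero] at h2; rw [h2] at h1; linarith

/-- Extension of a vector on `Fin n` to `ℕ`, shifted by one and padded with zeros. -/
def extv (n : ℕ) (v : Fin n → ℝ) (j : ℕ) : ℝ :=
  if h : 0 < j ∧ j ≤ n then v ⟨j-1, by omega⟩ else 0

lemma extv_val {n : ℕ} (v : Fin n → ℝ) (i : Fin n) : extv n v (i.1+1) = v i := by
  have h : 0 < i.1+1 ∧ i.1+1 ≤ n := ⟨Nat.succ_pos _, i.2⟩
  rw [extv, dif_pos h]
  congr 1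

lemma sum_ite_fin {n : ℕ} (v : Fin n → ℝ) (m : ℕ) :
    ∑ j : Fin n, (if j.1 = m then v j else 0) = if h : m < n then v ⟨m, h⟩ else 0 := by
  split
  · next h =>
    rw [Finset.sum_eq_single_of_mem ⟨m, h⟩ (Finset.mem_univ _)
      (fun b _ hb => if_neg (fun hc => hb (Fin.ext hc)))]
    simp
  · next h =>
    exact Finset.sum_eq_zero fun j _ => if_neg (by have := j.2; omega)

lemma mulVec_path {n : ℕ} (v : Fin n → ℝ) (i : Fin n) :
    (pathAdj n).mulVec v i = extv n v i.1 + extv n v (i.1+2) := by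
  have hsum : (pathAdj n).mulVec v i
      = ∑ j : Fin n, ((if j.1 = i.1 - 1 ∧ 0 < i.1 then v j else 0)
        + (if j.1 = i.1 + 1 then v j else 0)) := by
    unfold Matrix.mulVec dotProduct pathAdj
    refine Finset.sum_congr rfl fun j _ => ?_
    simp only [Matrix.of_apply]
    split_ifs <;> first | ring1 | (exfalso; omega)
  rw [hsum, Finset.sum_add_distrib]
  congr 1
  · rcases Nat.eq_zero_or_pos i.1 with h0 | h0
    · rw [Finset.sum_eq_zero fun j _ => if_neg (by omega), extv, dif_neg (by omega)]
    · have : ∀ j : Fin n, (if j.1 = i.1 - 1 ∧ 0 < i.1 then v j else 0)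
          = (if j.1 = i.1 - 1 then v j else 0) := by
        intro j; split_ifs <;> first | rfl | omega
      rw [Finset.sum_congr rfl fun j _ => this j, sum_ite_fin,
        dif_pos (show i.1 - 1 < n by omega), extv,
        dif_pos (show 0 < i.1 ∧ i.1 ≤ n from ⟨h0, le_of_lt i.2⟩)]
  · rw [sum_ite_fin, extv]
    rcases lt_or_ge (i.1+1) n with h | h
    · rw [dif_pos h, dif_pos (by omega)]
      congr 1
    · rw [dif_neg (by omega), dif_neg (by omega)]

lemma extv_rec {n : ℕ} {μ : ℝ} {v : Fin n → ℝ}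
    (hv : (pathAdj n).mulVec v = μ • v) :
    ∀ j ≤ n + 1, extv n v j = cheb μ j * extv n v 1 := by
  intro j
  induction j using Nat.twoStepInduction with
  | zero => intro _; simp [extv, cheb]
  | one => intro _; simp [cheb]
  | more k ih1 ih2 =>
    intro hk
    have hklt : k < n := by omega
    have hrow := congrFun hv ⟨k, hklt⟩
    rw [mulVec_path, Pi.smul_apply, smul_eq_mul, ← extv_val v ⟨k, hklt⟩] at hrow
    have e2 : extv n v (k+2) = μ * extv n v (k+1) - extv n v k := by
      simp only at hrow; linarith [hrow]
    rw [e2, ih1 (by omega), ih2 (by omega),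
      show cheb μ (k+2) = μ * cheb μ (k+1) - cheb μ k from rfl]
    ring

lemma driver_of_coprime {n : ℕ} (i : Fin n) (hcop : Nat.Coprime (i.1+1) (n+1)) :
    ∀ (μ : ℝ) (v : Fin n → ℝ), v ≠ 0 → (pathAdj n).mulVec v = μ • v → v i ≠ 0 := by
  intro μ v hv0 hv hvi
  have hrec := extv_rec hv
  have he1 : extv n v 1 ≠ 0 := by
    intro h
    apply hv0
    funext k
    have hk := hrec (k.1+1) (by have := k.2; omega)
    rw [extv_val] at hk
    rw [hk, h, mul_zero]; simp
  have hend : cheb μ (n+1) = 0 := by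
    have h1 := hrec (n+1) le_rfl
    rw [extv, dif_neg (by omega)] at h1
    exact (mul_eq_zero.mp h1.symm).resolve_right he1
  have hci : cheb μ (i.1+1) = 0 := by
    have h1 := hrec (i.1+1) (by have := i.2; omega)
    rw [extv_val, hvi] at h1
    exact (mul_eq_zero.mp h1.symm).resolve_right he1
  have hlt : |μ| < 2 := by
    by_contra h
    exact cheb_ne_zero μ (le_of_not_gt h) (n+1) (Nat.succ_pos n) hend
  set θ := Real.arccos (μ/2) with hθdef
  have habs := abs_lt.mp hlt
  have hcos : Real.cos θ = μ/2 := Real.cos_arccos (by linarith [habs.1]) (by linarith [habs.2])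
  have hθ0 : 0 < θ := Real.arccos_pos.mpr (by linarith [habs.2])
  have hθπ : θ < π := lt_of_le_of_ne (Real.arccos_le_pi _)
    (fun h => by have := Real.arccos_eq_pi.mp h; linarith [habs.1])
  have hμeq : μ = 2 * Real.cos θ := by rw [hcos]; ring
  have hs1 : Real.sin (((n+1 : ℕ) : ℝ) * θ) = 0 := by
    rw [← cheb_sin θ (n+1), ← hμeq, hend, zero_mul]
  have hs2 : Real.sin (((i.1+1 : ℕ) : ℝ) * θ) = 0 := by
    rw [← cheb_sin θ (i.1+1), ← hμeq, hci, zero_mul]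
  obtain ⟨k, hk⟩ := Real.sin_eq_zero_iff.mp hs1
  obtain ⟨m, hm⟩ := Real.sin_eq_zero_iff.mp hs2
  have hπ := Real.pi_pos
  have hn1pos : (0:ℝ) < ((n+1:ℕ):ℝ) := by positivity
  have hk1 : (1:ℤ) ≤ k := by
    by_contra h
    push_neg at h
    have hk0 : (k:ℝ) ≤ 0 := by exact_mod_cast Int.lt_add_one_iff.mp h
    nlinarith [mul_pos hn1pos hθ0]
  have hkn : (k:ℤ) ≤ n := by
    by_contra h
    push_neg at h
    have hk' : ((n+1:ℕ):ℝ) ≤ (k:ℝ) := by push_cast; exact_mod_cast h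
    have hlt2 : ((n+1:ℕ):ℝ) * θ < ((n+1:ℕ):ℝ) * π :=
      mul_lt_mul_of_pos_left hθπ hn1pos
    nlinarith
  have key : (k * (i.1+1) : ℤ) = m * (n+1) := by
    have h1 : ((k * (i.1+1) : ℤ) : ℝ) * π = ((m * (n+1) : ℤ) : ℝ) * π := by
      push_cast
      push_cast at hk hm
      linear_combination ((i.1:ℝ)+1) * hk - ((n:ℝ)+1) * hm
    have := mul_right_cancel₀ (ne_of_gt hπ) h1
    exact_mod_cast this
  have hdvd : ((n+1 : ℕ) : ℤ) ∣ k := by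
    have hco : IsCoprime ((n+1 : ℕ) : ℤ) ((i.1+1 : ℕ) : ℤ) := by
      rw [Int.isCoprime_iff_gcd_eq_one]
      exact_mod_cast hcop.symm
    refine hco.dvd_of_dvd_mul_right ⟨m, ?_⟩
    push_cast
    push_cast at key
    linarith
  have := Int.le_of_dvd (by omega) hdvd
  push_cast at this
  omega

lemma not_driver_of_not_coprime {n : ℕ} (hn : 0 < n) (i : Fin n)
    (hcop : ¬ Nat.Coprime (i.1+1) (n+1)) :
    ¬ (∀ (μ : ℝ) (v : Fin n → ℝ), v ≠ 0 → (pathAdj n).mulVec v = μ • v → v i ≠ 0) := by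
  intro H
  set d := Nat.gcd (i.1+1) (n+1) with hd
  have hd2 : 2 ≤ d := by
    rcases Nat.lt_or_ge d 2 with h | h
    · interval_cases d
      · exact absurd (Nat.eq_zero_of_gcd_eq_zero_right hd.symm) (by omega)
      · exact absurd hd.symm hcop
    · exact h
  have hddvd : d ∣ n + 1 := Nat.gcd_dvd_right _ _
  have hddvd' : d ∣ i.1 + 1 := Nat.gcd_dvd_left _ _
  set k := (n+1)/d with hkdef
  have hdk : d * k = n + 1 := Nat.mul_div_cancel' hddvd
  have hk1 : 1 ≤ k := by
    rcases Nat.eq_zero_or_pos k with h | h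
    · rw [h, Nat.mul_zero] at hdk; omega
    · exact h
  have hkn : k ≤ n := by nlinarith [hdk, hd2, hk1]
  have hπ := Real.pi_pos
  set θ := (k : ℝ) * π / ((n:ℝ)+1) with hθdef
  have hn1 : (0:ℝ) < (n:ℝ)+1 := by positivity
  have hθ0 : 0 < θ := by
    rw [hθdef]
    have : (0:ℝ) < (k:ℝ) := by exact_mod_cast hk1
    positivity
  have hθπ : θ < π := by
    rw [hθdef, div_lt_iff₀ hn1]
    have : (k:ℝ) < (n:ℝ)+1 := by exact_mod_cast Nat.lt_succ_of_le hkn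
    nlinarith
  set v : Fin n → ℝ := fun j => Real.sin (((j.1+1 : ℕ) : ℝ) * θ) with hvdef
  have hext : ∀ j ≤ n+1, extv n v j = Real.sin ((j : ℝ) * θ) := by
    intro j hj
    rcases Nat.eq_zero_or_pos j with h0 | h0
    · subst h0; rw [extv, dif_neg (by omega)]; simp
    · rcases Nat.lt_or_ge j (n+1) with hlt | hge
      · rw [extv, dif_pos ⟨h0, by omega⟩, hvdef]
        have : j - 1 + 1 = j := by omega
        simp only [this]
      · have hj' : j = n + 1 := by omega
        subst hj'
        rw [extv, dif_neg (by omega)]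
        have : ((n+1 : ℕ) : ℝ) * θ = (k : ℝ) * π := by
          rw [hθdef]; push_cast; field_simp
        push_cast at this ⊢
        rw [this]
        exact (Real.sin_nat_mul_pi k).symm
  have heig : (pathAdj n).mulVec v = (2 * Real.cos θ) • v := by
    funext i'
    rw [mulVec_path, Pi.smul_apply, smul_eq_mul]
    rw [hext i'.1 (by have := i'.2; omega), hext (i'.1+2) (by have := i'.2; omega)]
    have e1 : ((i'.1:ℕ) : ℝ) * θ = ((i'.1+1 : ℕ) : ℝ) * θ - θ := by push_cast; ring
    have e2 : ((i'.1+2:ℕ) : ℝ) * θ = ((i'.1+1 : ℕ) : ℝ) * θ + θ := by push_cast; ring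
    push_cast at e1 e2 ⊢
    rw [e1, e2, Real.sin_add, Real.sin_sub, hvdef]
    push_cast
    ring
  have hv0 : v ≠ 0 := by
    intro h
    have h0 := congrFun h ⟨0, hn⟩
    have : Real.sin θ > 0 := Real.sin_pos_of_pos_of_lt_pi hθ0 hθπ
    rw [hvdef] at h0
    simp at h0
    rw [h0] at this
    exact lt_irrefl 0 this
  have hvi : v i = 0 := by
    obtain ⟨e, he⟩ := hddvd'
    have hnat : (i.1+1) * k = e * (n+1) := by
      calc (i.1+1) * k = e * (d * k) := by rw [he]; ring
      _ = e * (n+1) := by rw [hdk]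
    have : ((i.1+1 : ℕ) : ℝ) * θ = (e : ℝ) * π := by
      rw [hθdef]
      rw [div_eq_iff (ne_of_gt hn1)] at *
      field_simp
      have := congrArg (fun t : ℕ => (t : ℝ)) hnat
      push_cast at this ⊢
      nlinarith [this]
    rw [hvdef]
    simp only
    rw [this]
    exact Real.sin_nat_mul_pi e
  exact H (2 * Real.cos θ) v hv0 heig hvi

/-- `{i}` is a driver set for `P_n` iff no eigenvector of the adjacency matrix has
`i`-th entry zero (PBH test); the number of such `i` is `φ(n+1)`. -/
theorem stmt3 (n : ℕ) (hn : 0 < n) :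
    Nat.card {i : Fin n //
        ∀ (μ : ℝ) (v : Fin n → ℝ), v ≠ 0 → (pathAdj n).mulVec v = μ • v → v i ≠ 0}
      = Nat.totient (n + 1) := by
  have hiff : ∀ i : Fin n,
      (∀ (μ : ℝ) (v : Fin n → ℝ), v ≠ 0 → (pathAdj n).mulVec v = μ • v → v i ≠ 0)
        ↔ Nat.Coprime (i.1+1) (n+1) := by
    intro i
    constructor
    · intro H
      by_contra h
      exact not_driver_of_not_coprime hn i h H
    · exact driver_of_coprime i
  rw [Nat.card_congr (Equiv.subtypeEquivRight hiff), Nat.card_eq_fintype_card,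
    Fintype.card_subtype,
    show Nat.totient (n+1) = ((Finset.range (n+1)).filter (Nat.Coprime (n+1))).card from rfl]
  apply Finset.card_nbij (fun i : Fin n => i.1 + 1)
  · intro a ha
    rw [Finset.mem_coe, Finset.mem_filter] at ha ⊢
    refine ⟨Finset.mem_range.mpr (by have := a.2; show a.1 + 1 < n + 1; omega), ha.2.symm⟩
  · intro a _ b _ hab
    simp only at hab
    exact Fin.ext (by omega)
  · intro b hb
    simp only [Finset.coe_filter, Finset.mem_range, Set.mem_setOf_eq] at hb
    obtain ⟨hb1, hb2⟩ := hb
    have hb0 : b ≠ 0 := by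
      intro h
      rw [h, Nat.coprime_zero_right] at hb2
      omega
    refine ⟨⟨b-1, by omega⟩, ?_, by simp; omega⟩
    simp only [Finset.coe_filter, Finset.mem_univ, Set.mem_setOf_eq, true_and]
    have : b - 1 + 1 = b := by omega
    rw [this]
    exact hb2.symm
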